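/- If S is a C⁴ solution of S'' = S - ρ on [0,L] with S'(0) = S'(L) = 0 and ρ ∈ C²([0,L]), then ∫₀^L (S')² + 2(S'')² + (S''')² dx = ∫₀^L (ρ')² dx. -/

import Mathlib

/-- H³-energy identity: for a C⁴ solution of S'' = S - ρ on [0,L] with Neumann
conditions and ρ ∈ C², ∫ (S')² + 2(S'')² + (S''')² = ∫ (ρ')². -/
theorem energy_identity_H3 (L : ℝ) (hL : 0 < L) (ρ ρ' ρ'' S S' S'' S''' S'''' : ℝ → ℝ)
    (hρ1 : ∀ x ∈ Set.Icc (0:ℝ) L, HasDerivAt ρ (ρ' x) x)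
    (hρ2 : ∀ x ∈ Set.Icc (0:ℝ) L, HasDerivAt ρ' (ρ'' x) x)
    (hρ2c : ContinuousOn ρ'' (Set.Icc (0:ℝ) L))
    (hS1 : ∀ x ∈ Set.Icc (0:ℝ) L, HasDerivAt S (S' x) x)
    (hS2 : ∀ x ∈ Set.Icc (0:ℝ) L, HasDerivAt S' (S'' x) x)
    (hS3 : ∀ x ∈ Set.Icc (0:ℝ) L, HasDerivAt S'' (S''' x) x)
    (hS4 : ∀ x ∈ Set.Icc (0:ℝ) L, HasDerivAt S''' (S'''' x) x)
    (hS4c : ContinuousOn S'''' (Set.Icc (0:ℝ) L))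
    (heq : ∀ x ∈ Set.Icc (0:ℝ) L, S'' x = S x - ρ x)
    (hS'0 : S' 0 = 0) (hS'L : S' L = 0) :
    (∫ x in (0:ℝ)..L, ((S' x)^2 + 2*(S'' x)^2 + (S''' x)^2))
      = ∫ x in (0:ℝ)..L, (ρ' x)^2 := by
  have hIcc : Set.uIcc (0:ℝ) L = Set.Icc 0 L := Set.uIcc_of_le hL.le
  have cS' : ContinuousOn S' (Set.Icc (0:ℝ) L) :=
    fun x hx => (hS2 x hx).continuousAt.continuousWithinAt
  have cS'' : ContinuousOn S'' (Set.Icc (0:ℝ) L) :=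
    fun x hx => (hS3 x hx).continuousAt.continuousWithinAt
  have cS''' : ContinuousOn S''' (Set.Icc (0:ℝ) L) :=
    fun x hx => (hS4 x hx).continuousAt.continuousWithinAt
  have cρ' : ContinuousOn ρ' (Set.Icc (0:ℝ) L) :=
    fun x hx => (hρ2 x hx).continuousAt.continuousWithinAt
  -- key pointwise identity on the interior: S''' = S' - ρ'
  have key : ∀ x ∈ Set.Ioo (0:ℝ) L, S''' x = S' x - ρ' x := by
    intro x hx
    have hnb : Set.Icc (0:ℝ) L ∈ nhds x := Icc_mem_nhds hx.1 hx.2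
    have hmem : x ∈ Set.Icc (0:ℝ) L := Set.Ioo_subset_Icc_self hx
    have h1 : HasDerivAt S'' (S' x - ρ' x) x := by
      refine HasDerivAt.congr_of_eventuallyEq ((hS1 x hmem).sub (hρ1 x hmem)) ?_
      filter_upwards [hnb] with y hy using heq y hy
    exact (hS3 x hmem).unique h1
  -- integration by parts: ∫ (S'')² + S' S''' = 0
  have hF : ∀ x ∈ Set.uIcc (0:ℝ) L,
      HasDerivAt (fun y => S' y * S'' y) (S'' x * S'' x + S' x * S''' x) x := by
    rw [hIcc]; intro x hx; exact (hS2 x hx).mul (hS3 x hx)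
  have hint : IntervalIntegrable (fun x => S'' x * S'' x + S' x * S''' x)
      MeasureTheory.volume 0 L := by
    apply ContinuousOn.intervalIntegrable
    rw [hIcc]; exact (cS''.mul cS'').add (cS'.mul cS''')
  have hIBP : (∫ x in (0:ℝ)..L, (S'' x * S'' x + S' x * S''' x)) = 0 := by
    rw [intervalIntegral.integral_eq_sub_of_hasDerivAt hF hint, hS'L, hS'0]; ring
  have hLint : IntervalIntegrable
      (fun x => (S' x)^2 + 2*(S'' x)^2 + (S''' x)^2) MeasureTheory.volume 0 L := by
    apply ContinuousOn.intervalIntegrable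
    rw [hIcc]
    exact ((cS'.pow 2).add ((continuousOn_const.mul (cS''.pow 2)))).add (cS'''.pow 2)
  have hRint : IntervalIntegrable (fun x => (ρ' x)^2) MeasureTheory.volume 0 L := by
    apply ContinuousOn.intervalIntegrable
    rw [hIcc]; exact cρ'.pow 2
  rw [← sub_eq_zero, ← intervalIntegral.integral_sub hLint hRint]
  have hcongr : (∫ x in (0:ℝ)..L,
        ((S' x)^2 + 2*(S'' x)^2 + (S''' x)^2 - (ρ' x)^2))
      = ∫ x in (0:ℝ)..L, (2:ℝ) * (S'' x * S'' x + S' x * S''' x) := by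
    apply intervalIntegral.integral_congr_ae
    have hne : ∀ᵐ x : ℝ ∂MeasureTheory.volume, x ≠ L := by
      have h0 : (MeasureTheory.volume : MeasureTheory.Measure ℝ) {L} = 0 :=
        MeasureTheory.measure_singleton L
      have := (MeasureTheory.measure_eq_zero_iff_ae_notMem).mp h0
      filter_upwards [this] with x hx
      simpa using hx
    filter_upwards [hne] with x hx hxI
    rw [Set.uIoc_of_le hL.le] at hxI
    have hxo : x ∈ Set.Ioo (0:ℝ) L := ⟨hxI.1, lt_of_le_of_ne hxI.2 hx⟩
    have hk := key x hxo
    have : ρ' x = S' x - S''' x := by rw [hk]; ring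
    rw [this]; ring
  rw [hcongr, intervalIntegral.integral_const_mul, hIBP, mul_zero]
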